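/- Let n ≥ 0, p > 0 and let I ⊆ {1,…,n+p} have cardinality p. For every packed word w of length n, the word φ_I(w) is a packed word of length n+p whose maximal letter occurs exactly at the positions belonging to I, i.e. φ_I(w) ∈ PW_{n+p}^I. -/

import Mathlib

/-- The maximum letter of a word (a list of natural numbers), with `wmax [] = 0`. -/
def wmax (w : List ℕ) : ℕ := w.foldr max 0

/-- A word over the positive integers is packed if every letter from `1` to its maximum
occurs in it. -/
def IsPacked (w : List ℕ) : Prop :=
  (∀ x ∈ w, 0 < x) ∧ ∀ i : ℕ, 0 < i → i ≤ wmax w → i ∈ w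

/-- `phi I w` inserts occurrences of the new maximum letter `wmax w + 1` so that they
end up exactly at the (1-based) positions in `I`; the remaining positions carry the
letters of `w` in order. -/
def phi (I : Finset ℕ) (w : List ℕ) : List ℕ :=
  (List.range (w.length + I.card)).map (fun j =>
    if j + 1 ∈ I then wmax w + 1
    else w.getD ((List.range j).countP (fun k => decide (k + 1 ∉ I))) 0)

/-- The maximal letter of `w` occurs exactly at the (1-based) positions belonging to `I`. -/
def maxAt (w : List ℕ) (I : Finset ℕ) : Prop :=
  (∀ i ∈ I, 1 ≤ i ∧ i ≤ w.length) ∧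
  ∀ j, j < w.length → (w.getD j 0 = wmax w ↔ j + 1 ∈ I)

def cnt (I : Finset ℕ) (j : ℕ) : ℕ := (List.range j).countP (fun k => decide (k + 1 ∉ I))

lemma cnt_succ (I : Finset ℕ) (j : ℕ) :
    cnt I (j+1) = cnt I j + (if j + 1 ∈ I then 0 else 1) := by
  simp [cnt, List.range_succ, List.countP_append, List.countP_cons]
 

lemma cnt_mono (I : Finset ℕ) {j m : ℕ} (h : j ≤ m) : cnt I j ≤ cnt I m :=
  List.Sublist.countP_le (List.range_sublist.2 h)

lemma bridge (I : Finset ℕ) (m : ℕ) :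
    ((Finset.range m).filter fun k => k + 1 ∈ I).card
      = (List.range m).countP fun k => decide (k + 1 ∈ I) := by
  simp [Finset.card, Finset.filter, Finset.range, Multiset.range, List.countP_eq_length_filter]

lemma cnt_total {n p : ℕ} (I : Finset ℕ) (hI : I ⊆ Finset.Icc 1 (n + p))
    (hcard : I.card = p) : cnt I (n + p) = n := by
  have hfil : ((Finset.range (n+p)).filter fun k => k + 1 ∈ I).card = p := by
    rw [← hcard]
    apply Finset.card_bij (fun k _ => k + 1)
    · intro a ha; exact (Finset.mem_filter.1 ha).2
    · intro a ha b hb h; omega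
    · intro b hb
      have := hI hb
      simp only [Finset.mem_Icc] at this
      exact ⟨b - 1, Finset.mem_filter.2 ⟨Finset.mem_range.2 (by omega), by
        have : b - 1 + 1 = b := by omega
        rw [this]; exact hb⟩, by omega⟩
  have h1 : (List.range (n+p)).countP (fun k => decide (k + 1 ∈ I)) = p := by
    rw [← bridge]; exact hfil
  have h2 : (List.range (n+p)).countP (fun k => decide (k + 1 ∈ I))
      + (List.range (n+p)).countP (fun k => !decide (k + 1 ∈ I)) = n + p := by
    have := List.length_eq_countP_add_countP (fun k => decide (k + 1 ∈ I)) (l := List.range (n+p))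
    simpa [List.length_range] using this.symm
  have h3 : cnt I (n+p) = (List.range (n+p)).countP (fun k => !decide (k + 1 ∈ I)) := by
    simp [cnt, decide_not]
  omega

lemma cnt_surj (I : Finset ℕ) (m : ℕ) :
    ∀ i < cnt I m, ∃ j < m, (j + 1 ∉ I) ∧ cnt I j = i := by
  induction m with
  | zero => simp [cnt]
  | succ m ih =>
    intro i hi
    rw [cnt_succ] at hi
    by_cases hm : m + 1 ∈ I
    · simp [hm] at hi
      obtain ⟨j, hj, h1, h2⟩ := ih i hi
      exact ⟨j, by omega, h1, h2⟩
    · simp [hm] at hi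
      rcases Nat.lt_or_ge i (cnt I m) with h | h
      · obtain ⟨j, hj, h1, h2⟩ := ih i h
        exact ⟨j, by omega, h1, h2⟩
      · exact ⟨m, by omega, hm, by omega⟩

lemma cnt_lt {n p : ℕ} (I : Finset ℕ) (hI : I ⊆ Finset.Icc 1 (n + p))
    (hcard : I.card = p) {j : ℕ} (hj : j < n + p) (hjI : j + 1 ∉ I) :
    cnt I j < n := by
  have h1 : cnt I (j + 1) = cnt I j + 1 := by simp [cnt_succ, hjI]
  have h2 : cnt I (j + 1) ≤ cnt I (n + p) := cnt_mono I hj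
  rw [cnt_total I hI hcard] at h2
  omega

lemma le_wmax {w : List ℕ} {x : ℕ} (hx : x ∈ w) : x ≤ wmax w := by
  induction w with
  | nil => simp at hx
  | cons a t ih =>
    rcases List.mem_cons.1 hx with rfl | h
    · exact le_max_left _ _
    · exact le_trans (ih h) (le_max_right _ _)

lemma wmax_le {w : List ℕ} {B : ℕ} (h : ∀ x ∈ w, x ≤ B) : wmax w ≤ B := by
  induction w with
  | nil => simp [wmax]
  | cons a t ih =>
    exact max_le (h a (by simp)) (ih fun x hx => h x (by simp [hx]))

lemma phi_length (I : Finset ℕ) (w : List ℕ) :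
    (phi I w).length = w.length + I.card := by simp [phi]

lemma phi_getElem (I : Finset ℕ) (w : List ℕ) {j : ℕ} (hj : j < (phi I w).length) :
    (phi I w)[j] = if j + 1 ∈ I then wmax w + 1 else w.getD (cnt I j) 0 := by
  simp [phi, cnt]

lemma phi_getD (I : Finset ℕ) (w : List ℕ) {j : ℕ} (hj : j < w.length + I.card) :
    (phi I w).getD j 0 = if j + 1 ∈ I then wmax w + 1 else w.getD (cnt I j) 0 := by
  rw [List.getD_eq_getElem _ _ (by rwa [phi_length]), phi_getElem]

lemma getD_mem {w : List ℕ} {t : ℕ} (ht : t < w.length) : w.getD t 0 ∈ w := by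
  rw [List.getD_eq_getElem _ _ ht]; exact List.getElem_mem ht

theorem phi_mem_PW_I (n p : ℕ) (hp : 0 < p) (I : Finset ℕ)
    (hI : I ⊆ Finset.Icc 1 (n + p)) (hcard : I.card = p)
    (w : List ℕ) (hw : IsPacked w) (hlen : w.length = n) :
    IsPacked (phi I w) ∧ (phi I w).length = n + p ∧ maxAt (phi I w) I := by
  have hplen : (phi I w).length = n + p := by rw [phi_length, hlen, hcard]
  -- the I-positions carry wmax w + 1, others carry letters of w
  have hcntlt : ∀ j < n + p, j + 1 ∉ I → cnt I j < w.length := by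
    intro j hj hjI; rw [hlen]; exact cnt_lt I hI hcard hj hjI
  have hget : ∀ j < n + p, (phi I w).getD j 0 =
      if j + 1 ∈ I then wmax w + 1 else w.getD (cnt I j) 0 := by
    intro j hj; exact phi_getD I w (by rw [hlen, hcard]; exact hj)
  have hmemphi : ∀ j < n + p, (phi I w).getD j 0 ∈ phi I w := by
    intro j hj; exact getD_mem (by rw [hplen]; exact hj)
  -- wmax w + 1 occurs in phi
  have hImax : ∃ j < n + p, j + 1 ∈ I := by
    obtain ⟨i, hi⟩ := Finset.card_pos.1 (hcard ▸ hp)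
    have := hI hi; simp only [Finset.mem_Icc] at this
    exact ⟨i - 1, by omega, by rwa [Nat.sub_add_cancel this.1]⟩
  have hmax_mem : wmax w + 1 ∈ phi I w := by
    obtain ⟨j, hj, hjI⟩ := hImax
    have := hmemphi j hj
    rwa [hget j hj, if_pos hjI] at this
  have hwp : wmax (phi I w) = wmax w + 1 := by
    refine le_antisymm (wmax_le ?_) (le_wmax hmax_mem)
    intro x hx
    obtain ⟨k, hk, hkx⟩ := List.mem_iff_getElem.1 hx
    rw [← List.getD_eq_getElem _ 0 hk] at hkx
    rw [hget k (by rwa [hplen] at hk)] at hkx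
    split at hkx
    · omega
    · next h =>
      have := le_wmax (getD_mem (hcntlt k (by rwa [hplen] at hk) h))
      omega
  refine ⟨⟨?_, ?_⟩, hplen, ?_, ?_⟩
  · -- positivity
    intro x hx
    obtain ⟨k, hk, hkx⟩ := List.mem_iff_getElem.1 hx
    rw [← List.getD_eq_getElem _ 0 hk, hget k (by rwa [hplen] at hk)] at hkx
    split at hkx
    · omega
    · next h =>
      exact hkx ▸ hw.1 _ (getD_mem (hcntlt k (by rwa [hplen] at hk) h))
  · -- every letter 1..max occurs
    intro i hi hile
    rw [hwp] at hile
    rcases eq_or_lt_of_le hile with rfl | hlt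
    · exact hmax_mem
    · have hiw : i ∈ w := hw.2 i hi (by omega)
      obtain ⟨t, ht, hti⟩ := List.mem_iff_getElem.1 hiw
      have ht' : t < cnt I (n + p) := by rw [cnt_total I hI hcard]; omega
      obtain ⟨j, hj, hjI, hjc⟩ := cnt_surj I (n + p) t ht'
      have := hmemphi j hj
      rwa [hget j hj, if_neg hjI, hjc, List.getD_eq_getElem _ 0 ht, hti] at this
  · -- positions of I are within bounds
    intro i hi
    have := hI hi; simp only [Finset.mem_Icc] at this
    exact ⟨this.1, by rw [hplen]; exact this.2⟩
  · -- max exactly at I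
    intro j hj
    rw [hplen] at hj
    rw [hget j hj, hwp]
    constructor
    · intro h
      by_contra hjI
      rw [if_neg hjI] at h
      have := le_wmax (getD_mem (hcntlt j hj hjI))
      omega
    · intro hjI; rw [if_pos hjI]
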